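/- Let M = (M_α)_{α∈ℕ₀^d} be a normalized positive multi-sequence satisfying: there exists A ≥ 1 such that M_{α+e_j} ≤ A^{|α|+1} M_α for all α ∈ ℕ₀^d, 1 ≤ j ≤ d. Then there exist B₁, B₂ ≥ 1 such that (1+|t|)^{2(d+1)} exp(ω_M(t)) ≤ B₁ exp(ω_M(B₂ t)) for all t ∈ ℝ^d. -/

import Mathlib

open scoped BigOperators

/-- The (real-valued) associated function of a multi-indexed sequence:
`ω_M(t) = sup { log(|t^α|/M_α) : α_j = 0 whenever t_j = 0 }`. -/
noncomputable def assocFnMultiR (d : ℕ) (M : (Fin d → ℕ) → ℝ)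
    (t : EuclideanSpace ℝ (Fin d)) : ℝ :=
  ⨆ α : {α : Fin d → ℕ // ∀ j, t j = 0 → α j = 0},
    Real.log (|∏ j, (t j) ^ (α.1 j)| / M α.1)

section aux
variable {d : ℕ} {M : (Fin d → ℕ) → ℝ}

lemma adm_prod_pos (t : EuclideanSpace ℝ (Fin d)) (β : Fin d → ℕ)
    (hβ : ∀ j, t j = 0 → β j = 0) : 0 < |∏ j, (t j) ^ (β j)| := by
  rw [abs_pos]
  refine Finset.prod_ne_zero_iff.2 (fun j _ => ?_)
  rcases eq_or_ne (t j) 0 with h | h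
  · rw [hβ j h]; simp
  · exact pow_ne_zero _ h

lemma exp_omega_ge (hpos : ∀ α, 0 < M α)
    (hfin : ∀ t : EuclideanSpace ℝ (Fin d), BddAbove (Set.range
      (fun α : {α : Fin d → ℕ // ∀ j, t j = 0 → α j = 0} =>
        Real.log (|∏ j, (t j) ^ (α.1 j)| / M α.1))))
    (t : EuclideanSpace ℝ (Fin d)) (β : Fin d → ℕ)
    (hβ : ∀ j, t j = 0 → β j = 0) :
    |∏ j, (t j) ^ (β j)| / M β ≤ Real.exp (assocFnMultiR d M t) := by
  have hx : 0 < |∏ j, (t j) ^ (β j)| / M β := div_pos (adm_prod_pos t β hβ) (hpos β)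
  have hle : Real.log (|∏ j, (t j) ^ (β j)| / M β) ≤ assocFnMultiR d M t :=
    le_ciSup (hfin t) ⟨β, hβ⟩
  calc |∏ j, (t j) ^ (β j)| / M β = Real.exp (Real.log (|∏ j, (t j) ^ (β j)| / M β)) :=
        (Real.exp_log hx).symm
    _ ≤ Real.exp (assocFnMultiR d M t) := Real.exp_le_exp.2 hle

lemma smul_prod_eq (A : ℝ) (hA0 : 0 < A) (t : EuclideanSpace ℝ (Fin d)) (β : Fin d → ℕ) :
    ∏ j, ((A • t) j) ^ (β j) = A ^ (∑ j, β j) * ∏ j, (t j) ^ (β j) := by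
  have h : ∀ j, ((A • t) j) ^ (β j) = A ^ (β j) * (t j) ^ (β j) := fun j => by
    simp [mul_pow]
  rw [Finset.prod_congr rfl (fun j _ => h j), Finset.prod_mul_distrib,
    Finset.prod_pow_eq_pow_sum]

lemma key_step (hpos : ∀ α, 0 < M α)
    (hfin : ∀ t : EuclideanSpace ℝ (Fin d), BddAbove (Set.range
      (fun α : {α : Fin d → ℕ // ∀ j, t j = 0 → α j = 0} =>
        Real.log (|∏ j, (t j) ^ (α.1 j)| / M α.1))))
    {A : ℝ} (hA : 1 ≤ A)
    (hdcA : ∀ (α : Fin d → ℕ) (j : Fin d),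
      M (α + fun i => if i = j then 1 else 0) ≤ A ^ ((∑ i, α i) + 1) * M α)
    (t : EuclideanSpace ℝ (Fin d)) :
    (1 + ‖t‖) * Real.exp (assocFnMultiR d M t) ≤
      (1 + Real.sqrt d) * Real.exp (assocFnMultiR d M (A • t)) := by
  have hA0 : (0 : ℝ) < A := lt_of_lt_of_le one_pos hA
  have hadmA : ∀ (β : Fin d → ℕ), (∀ j, t j = 0 → β j = 0) →
      (∀ j, (A • t) j = 0 → β j = 0) := by
    intro β hβ j h
    have h' : A * t j = 0 := by simpa using h
    rcases mul_eq_zero.1 h' with h'' | h''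
    · exact absurd h'' (ne_of_gt hA0)
    · exact hβ j h''
  have hmain : ∀ α : {α : Fin d → ℕ // ∀ j, t j = 0 → α j = 0},
      (1 + ‖t‖) * (|∏ j, (t j) ^ (α.1 j)| / M α.1) ≤
        (1 + Real.sqrt d) * Real.exp (assocFnMultiR d M (A • t)) := by
    rintro ⟨α, hα⟩
    have hPpos : 0 < |∏ j, (t j) ^ (α j)| := adm_prod_pos t α hα
    -- claim 1
    have hclaim1 : |∏ j, (t j) ^ (α j)| / M α ≤ Real.exp (assocFnMultiR d M (A • t)) := by
      refine le_trans ?_ (exp_omega_ge hpos hfin (A • t) α (hadmA α hα))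
      refine div_le_div_of_nonneg_right ?_ (hpos α).le
      rw [smul_prod_eq A hA0 t α, abs_mul, abs_pow, abs_of_pos hA0]
      exact le_mul_of_one_le_left (abs_nonneg _) (one_le_pow₀ hA)
    -- claim 2
    have hclaim2 : ‖t‖ * (|∏ j, (t j) ^ (α j)| / M α) ≤
        Real.sqrt d * Real.exp (assocFnMultiR d M (A • t)) := by
      rcases eq_or_ne t 0 with rfl | ht
      · have : ‖(0 : EuclideanSpace ℝ (Fin d))‖ = 0 := norm_zero
        rw [this, zero_mul]
        positivity
      · obtain ⟨j0, hj0⟩ : ∃ j, t j ≠ 0 := by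
          by_contra h; push_neg at h; exact ht (PiLp.ext (fun i => by simp [h i]))
        obtain ⟨j, -, hj⟩ := Finset.exists_max_image Finset.univ (fun i => |t i|)
          ⟨j0, Finset.mem_univ _⟩
        have htj : t j ≠ 0 := by
          intro h
          apply hj0
          have h1 := hj j0 (Finset.mem_univ _)
          rw [h, abs_zero] at h1
          exact abs_eq_zero.1 (le_antisymm h1 (abs_nonneg _))
        have hnorm_le : ‖t‖ ≤ Real.sqrt d * |t j| := by
          rw [EuclideanSpace.norm_eq]
          have hsum : ∑ i, ‖t i‖ ^ 2 ≤ (d : ℝ) * |t j| ^ 2 := by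
            calc ∑ i, ‖t i‖ ^ 2 ≤ ∑ _i : Fin d, |t j| ^ 2 :=
                  Finset.sum_le_sum (fun i _ => by
                    have h1 := hj i (Finset.mem_univ _)
                    have := pow_le_pow_left₀ (abs_nonneg (t i)) h1 2
                    simpa [Real.norm_eq_abs] using this)
              _ = (d : ℝ) * |t j| ^ 2 := by
                  simp [Finset.sum_const, Finset.card_univ, nsmul_eq_mul]
          calc Real.sqrt (∑ i, ‖t i‖ ^ 2) ≤ Real.sqrt ((d : ℝ) * |t j| ^ 2) :=
                Real.sqrt_le_sqrt hsum
            _ = Real.sqrt d * |t j| := by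
                rw [Real.sqrt_mul (Nat.cast_nonneg d), Real.sqrt_sq_eq_abs, abs_abs]
        set α' : Fin d → ℕ := α + fun i => if i = j then 1 else 0 with hα'def
        have hadm'' : ∀ i, (A • t) i = 0 → α' i = 0 := by
          intro i h
          have h' : A * t i = 0 := by simpa using h
          have hti : t i = 0 := by
            rcases mul_eq_zero.1 h' with h'' | h''
            · exact absurd h'' (ne_of_gt hA0)
            · exact h''
          have hij : i ≠ j := fun e => htj (e ▸ hti)
          simp [hα'def, hα i hti, hij]
        have hP' : ∏ i, (t i) ^ (α' i) = (∏ i, (t i) ^ (α i)) * t j := by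
          simp only [hα'def, Pi.add_apply, pow_add]
          rw [Finset.prod_mul_distrib]
          congr 1
          simp [pow_ite]
        have hsum' : ∑ i, α' i = (∑ i, α i) + 1 := by
          simp [hα'def, Finset.sum_add_distrib]
        have hMle := hdcA α j
        have step3 : A ^ ((∑ i, α i) + 1) * (|t j| * |∏ i, (t i) ^ (α i)|) / M α' ≤
            Real.exp (assocFnMultiR d M (A • t)) := by
          have h := exp_omega_ge hpos hfin (A • t) α' hadm''
          have heq : |∏ i, ((A • t) i) ^ (α' i)| =
              A ^ ((∑ i, α i) + 1) * (|t j| * |∏ i, (t i) ^ (α i)|) := by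
            rw [smul_prod_eq A hA0 t α', hsum', hP', abs_mul, abs_mul, abs_pow,
              abs_of_pos hA0]
            ring
          rwa [heq] at h
        have step2 : |t j| * |∏ i, (t i) ^ (α i)| / M α ≤
            A ^ ((∑ i, α i) + 1) * (|t j| * |∏ i, (t i) ^ (α i)|) / M α' := by
          rw [div_le_div_iff₀ (hpos α) (hpos α')]
          calc |t j| * |∏ i, (t i) ^ (α i)| * M α'
              ≤ |t j| * |∏ i, (t i) ^ (α i)| * (A ^ ((∑ i, α i) + 1) * M α) := by
                have hnn : (0:ℝ) ≤ |t j| * |∏ i, (t i) ^ (α i)| := mul_nonneg (abs_nonneg _) (abs_nonneg _)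
                exact mul_le_mul_of_nonneg_left hMle hnn
            _ = A ^ ((∑ i, α i) + 1) * (|t j| * |∏ i, (t i) ^ (α i)|) * M α := by ring
        calc ‖t‖ * (|∏ j, (t j) ^ (α j)| / M α)
            ≤ (Real.sqrt d * |t j|) * (|∏ j, (t j) ^ (α j)| / M α) :=
              mul_le_mul_of_nonneg_right hnorm_le
                (div_nonneg (abs_nonneg _) (hpos α).le)
          _ = Real.sqrt d * (|t j| * |∏ i, (t i) ^ (α i)| / M α) := by ring
          _ ≤ Real.sqrt d * (A ^ ((∑ i, α i) + 1) * (|t j| * |∏ i, (t i) ^ (α i)|) / M α') :=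
              mul_le_mul_of_nonneg_left step2 (Real.sqrt_nonneg d)
          _ ≤ Real.sqrt d * Real.exp (assocFnMultiR d M (A • t)) :=
              mul_le_mul_of_nonneg_left step3 (Real.sqrt_nonneg d)
    nlinarith [hclaim1, hclaim2]
  -- from hmain to the statement, via logs
  haveI : Nonempty {α : Fin d → ℕ // ∀ j, t j = 0 → α j = 0} := ⟨⟨0, fun _ _ => rfl⟩⟩
  have h1t : (0 : ℝ) < 1 + ‖t‖ := by positivity
  have hsd : (0 : ℝ) < 1 + Real.sqrt d := by positivity
  have hlog : Real.log (1 + ‖t‖) + assocFnMultiR d M t ≤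
      Real.log (1 + Real.sqrt d) + assocFnMultiR d M (A • t) := by
    have hs : assocFnMultiR d M t ≤
        (Real.log (1 + Real.sqrt d) + assocFnMultiR d M (A • t)) - Real.log (1 + ‖t‖) := by
      apply ciSup_le
      intro α
      have hx : 0 < |∏ j, (t j) ^ (α.1 j)| / M α.1 :=
        div_pos (adm_prod_pos t α.1 α.2) (hpos α.1)
      have h3 : Real.log ((1 + ‖t‖) * (|∏ j, (t j) ^ (α.1 j)| / M α.1)) ≤
          Real.log ((1 + Real.sqrt d) * Real.exp (assocFnMultiR d M (A • t))) :=
        Real.log_le_log (mul_pos h1t hx) (hmain α)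
      rw [Real.log_mul (ne_of_gt h1t) (ne_of_gt hx),
        Real.log_mul (ne_of_gt hsd) (ne_of_gt (Real.exp_pos _)), Real.log_exp] at h3
      linarith
    linarith
  have h4 := Real.exp_le_exp.2 hlog
  rwa [Real.exp_add, Real.exp_add, Real.exp_log h1t, Real.exp_log hsd] at h4

lemma iter_step (hpos : ∀ α, 0 < M α)
    (hfin : ∀ t : EuclideanSpace ℝ (Fin d), BddAbove (Set.range
      (fun α : {α : Fin d → ℕ // ∀ j, t j = 0 → α j = 0} =>
        Real.log (|∏ j, (t j) ^ (α.1 j)| / M α.1))))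
    {A : ℝ} (hA : 1 ≤ A)
    (hdcA : ∀ (α : Fin d → ℕ) (j : Fin d),
      M (α + fun i => if i = j then 1 else 0) ≤ A ^ ((∑ i, α i) + 1) * M α)
    (n : ℕ) : ∀ t : EuclideanSpace ℝ (Fin d),
    (1 + ‖t‖) ^ n * Real.exp (assocFnMultiR d M t) ≤
      (1 + Real.sqrt d) ^ n * Real.exp (assocFnMultiR d M (A ^ n • t)) := by
  induction n with
  | zero => intro t; simp
  | succ n ih =>
    intro t
    have hA0 : (0 : ℝ) < A := lt_of_lt_of_le one_pos hA
    have hnt : 1 + ‖t‖ ≤ 1 + ‖A • t‖ := by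
      have : ‖A • t‖ = A * ‖t‖ := by
        rw [norm_smul, Real.norm_eq_abs, abs_of_pos hA0]
      rw [this]
      nlinarith [norm_nonneg t]
    calc (1 + ‖t‖) ^ (n + 1) * Real.exp (assocFnMultiR d M t)
        = (1 + ‖t‖) ^ n * ((1 + ‖t‖) * Real.exp (assocFnMultiR d M t)) := by ring
      _ ≤ (1 + ‖t‖) ^ n * ((1 + Real.sqrt d) * Real.exp (assocFnMultiR d M (A • t))) :=
          mul_le_mul_of_nonneg_left (key_step hpos hfin hA hdcA t) (by positivity)
      _ ≤ (1 + ‖A • t‖) ^ n * ((1 + Real.sqrt d) * Real.exp (assocFnMultiR d M (A • t))) := by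
          apply mul_le_mul_of_nonneg_right (pow_le_pow_left₀ (by positivity) hnt n)
          positivity
      _ = (1 + Real.sqrt d) * ((1 + ‖A • t‖) ^ n * Real.exp (assocFnMultiR d M (A • t))) := by
          ring
      _ ≤ (1 + Real.sqrt d) *
            ((1 + Real.sqrt d) ^ n * Real.exp (assocFnMultiR d M (A ^ n • A • t))) :=
          mul_le_mul_of_nonneg_left (ih (A • t)) (by positivity)
      _ = (1 + Real.sqrt d) ^ (n + 1) * Real.exp (assocFnMultiR d M (A ^ (n + 1) • t)) := by
          rw [smul_smul, ← pow_succ]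
          ring

end aux

/-- If the normalized positive multi-sequence `M` satisfies
`M_{α+e_j} ≤ A^{|α|+1} M_α` (some `A ≥ 1`, all `α, j`) and its associated function is
finite (the defining family is bounded above for each `t`), then there are `B₁, B₂ ≥ 1`
with `(1+|t|)^{2(d+1)} exp(ω_M(t)) ≤ B₁ exp(ω_M(B₂ t))` for all `t ∈ ℝ^d`. -/
theorem stmt10 (d : ℕ) (M : (Fin d → ℕ) → ℝ) (hpos : ∀ α, 0 < M α) (hnorm : M 0 = 1)
    (hfin : ∀ t : EuclideanSpace ℝ (Fin d), BddAbove (Set.range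
      (fun α : {α : Fin d → ℕ // ∀ j, t j = 0 → α j = 0} =>
        Real.log (|∏ j, (t j) ^ (α.1 j)| / M α.1))))
    (hdc : ∃ A : ℝ, 1 ≤ A ∧ ∀ (α : Fin d → ℕ) (j : Fin d),
      M (α + fun i => if i = j then 1 else 0) ≤ A ^ ((∑ i, α i) + 1) * M α) :
    ∃ B₁ B₂ : ℝ, 1 ≤ B₁ ∧ 1 ≤ B₂ ∧ ∀ t : EuclideanSpace ℝ (Fin d),
      (1 + ‖t‖) ^ (2 * (d + 1)) * Real.exp (assocFnMultiR d M t) ≤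
        B₁ * Real.exp (assocFnMultiR d M (B₂ • t)) := by
  obtain ⟨A, hA, hdcA⟩ := hdc
  refine ⟨(1 + Real.sqrt d) ^ (2 * (d + 1)), A ^ (2 * (d + 1)),
    one_le_pow₀ (by nlinarith [Real.sqrt_nonneg (d : ℝ)]),
    one_le_pow₀ hA, fun t => ?_⟩
  exact iter_step hpos hfin hA hdcA (2 * (d + 1)) t
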